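/- Let X be a Banach space with dual space X′, and let f : (0, ∞) → X and g : (0, ∞) → X′ be continuous functions for which there exist C, ε > 0 with ‖f(t)‖_X ≤ C min(t^ε, t^{−ε}) and ‖g(t)‖_{X′} ≤ C min(t^ε, t^{−ε}) for all t > 0. For σ ∈ ℝ define the absolutely convergent Bochner integrals Mf(iσ) = ∫₀^∞ t^{iσ−1} f(t) dt ∈ X and Mg(−iσ) = ∫₀^∞ t^{−iσ−1} g(t) dt ∈ X′. If in addition σ ↦ ‖Mf(iσ)‖_X is integrable over ℝ, then ∫₀^∞ ⟨f(t), g(t)⟩ dt/t = (1/2π) ∫_ℝ ⟨Mf(iσ), Mg(−iσ)⟩ dσ, where both integrals converge absolutely. -/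

import Mathlib

/- STATEMENT 15: Plancherel/Mellin duality formula
`∫₀^∞ ⟨f(t), g(t)⟩ dt/t = (1/2π) ∫_ℝ ⟨Mf(iσ), Mg(−iσ)⟩ dσ`,
where `Mf(iσ) = ∫₀^∞ t^{iσ−1} f(t) dt` and `Mg(−iσ) = ∫₀^∞ t^{−iσ−1} g(t) dt`.
The dual space `X′` is formalized as `X →L[ℂ] ℂ`, with pairing `⟨x, x′⟩ = x′ x`. -/

open MeasureTheory Set Complex Filter

lemma aux_conv {E : Type*} [NormedAddCommGroup E] [NormedSpace ℂ E]
    (h : ℝ → E) (hc : ContinuousOn h (Set.Ioi 0)) {C ε : ℝ} (hC : 0 ≤ C) (hε : 0 < ε)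
    (hb : ∀ t : ℝ, 0 < t → ‖h t‖ ≤ C * min (t ^ ε) (t ^ (-ε)))
    {s : ℂ} (hs : s.re = 0) : MellinConvergent h s := by
  have hloc : LocallyIntegrableOn h (Set.Ioi 0) :=
    hc.locallyIntegrableOn measurableSet_Ioi
  have htop : h =O[atTop] (fun t : ℝ => t ^ (-ε)) := by
    rw [Asymptotics.isBigO_iff]
    refine ⟨C, ?_⟩
    filter_upwards [eventually_gt_atTop 0] with t ht
    rw [Real.norm_of_nonneg (Real.rpow_nonneg ht.le _)]
    exact (hb t ht).trans (mul_le_mul_of_nonneg_left (min_le_right _ _) hC)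
  have hbot : h =O[nhdsWithin 0 (Set.Ioi 0)] (fun t : ℝ => t ^ (-(-ε))) := by
    rw [Asymptotics.isBigO_iff]
    refine ⟨C, ?_⟩
    filter_upwards [self_mem_nhdsWithin] with t ht
    rw [neg_neg, Real.norm_of_nonneg (Real.rpow_nonneg (le_of_lt ht) _)]
    exact (hb t ht).trans (mul_le_mul_of_nonneg_left (min_le_left _ _) hC)
  exact mellinConvergent_of_isBigO_rpow hloc htop (by rw [hs]; linarith) hbot (by rw [hs]; linarith)

lemma aux_cont {E : Type*} [NormedAddCommGroup E] [NormedSpace ℂ E] [CompleteSpace E]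
    (h : ℝ → E) (hconv : ∀ s : ℂ, s.re = 0 → MellinConvergent h s) :
    Continuous fun σ : ℝ => mellin h (I * σ) := by
  have := continuous_of_dominated (μ := volume.restrict (Ioi 0))
    (F := fun (σ : ℝ) (t : ℝ) => (t : ℂ) ^ (I * (σ : ℂ) - 1) • h t)
    (bound := fun t => ‖(t : ℂ) ^ ((0:ℂ) - 1) • h t‖)
    (fun σ => (hconv (I * σ) (by simp)).aestronglyMeasurable)
    (fun σ => by
      filter_upwards [ae_restrict_mem measurableSet_Ioi] with t ht
      have ht : (0:ℝ) < t := ht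
      simp only [norm_smul,
        norm_cpow_eq_rpow_re_of_pos ht]
      simp)
    ((hconv 0 (by simp)).norm)
    (by
      filter_upwards [ae_restrict_mem measurableSet_Ioi] with t ht
      have ht0 : (t : ℂ) ≠ 0 := ofReal_ne_zero.mpr (ne_of_gt ht)
      exact ((continuous_const.mul Complex.continuous_ofReal).sub
        continuous_const).const_cpow (Or.inl ht0) |>.smul continuous_const)
  exact this


theorem stmt_15 {X : Type*} [NormedAddCommGroup X] [NormedSpace ℂ X] [CompleteSpace X]
    (f : ℝ → X) (g : ℝ → (X →L[ℂ] ℂ))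
    (hf : ContinuousOn f (Set.Ioi 0)) (hg : ContinuousOn g (Set.Ioi 0))
    (C ε : ℝ) (hC : 0 < C) (hε : 0 < ε)
    (hfb : ∀ t : ℝ, 0 < t → ‖f t‖ ≤ C * min (t ^ ε) (t ^ (-ε)))
    (hgb : ∀ t : ℝ, 0 < t → ‖g t‖ ≤ C * min (t ^ ε) (t ^ (-ε)))
    -- σ ↦ ‖Mf(iσ)‖ is integrable over ℝ
    (hint : Integrable fun σ : ℝ =>
      ‖∫ t in Set.Ioi (0 : ℝ), (t : ℂ) ^ (Complex.I * (σ : ℂ) - 1) • f t‖) :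
    -- both integrals converge absolutely and the Plancherel-Mellin identity holds:
    IntegrableOn (fun t : ℝ => (g t) (f t) / (t : ℂ)) (Set.Ioi 0) ∧
    Integrable (fun σ : ℝ =>
      (∫ t in Set.Ioi (0 : ℝ), (t : ℂ) ^ (-Complex.I * (σ : ℂ) - 1) • g t)
        (∫ t in Set.Ioi (0 : ℝ), (t : ℂ) ^ (Complex.I * (σ : ℂ) - 1) • f t)) ∧
    ∫ t in Set.Ioi (0 : ℝ), (g t) (f t) / (t : ℂ) =
      (1 / (2 * (Real.pi : ℂ))) * ∫ σ : ℝ,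
        (∫ t in Set.Ioi (0 : ℝ), (t : ℂ) ^ (-Complex.I * (σ : ℂ) - 1) • g t)
          (∫ t in Set.Ioi (0 : ℝ), (t : ℂ) ^ (Complex.I * (σ : ℂ) - 1) • f t) := by
  -- normalize `-I * σ` to `-(I * σ)`
  simp only [neg_mul]
  set M : ℝ → X := fun σ => mellin f (I * σ) with hMdef
  -- basic convergence facts
  have hfconv : ∀ s : ℂ, s.re = 0 → MellinConvergent f s :=
    fun s hs => aux_conv f hf hC.le hε hfb hs
  have hgconv : ∀ s : ℂ, s.re = 0 → MellinConvergent g s :=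
    fun s hs => aux_conv g hg hC.le hε hgb hs
  have hint' : Integrable fun σ : ℝ => ‖M σ‖ := by
    simpa only [hMdef, mellin] using hint
  have hMcont : Continuous M := aux_cont f hfconv
  have hMint : Integrable M :=
    ⟨hMcont.aestronglyMeasurable, (hasFiniteIntegral_norm_iff M).mp hint'.hasFiniteIntegral⟩
  -- min ≤ 1
  have hmin1 : ∀ t : ℝ, 0 < t → min (t ^ ε) (t ^ (-ε)) ≤ 1 := by
    intro t ht
    rcases le_total t 1 with h1 | h1
    · exact (min_le_left _ _).trans (Real.rpow_le_one ht.le h1 hε.le)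
    · exact (min_le_right _ _).trans
        (Real.rpow_le_one_of_one_le_of_nonpos h1 (by linarith))
  -- Part 1
  have hpairc : ContinuousOn (fun t : ℝ => (g t) (f t)) (Set.Ioi 0) := hg.clm_apply hf
  have hpairb : ∀ t : ℝ, 0 < t →
      ‖(g t) (f t)‖ ≤ (C * C) * min (t ^ ε) (t ^ (-ε)) := by
    intro t ht
    have h1 := (g t).le_opNorm (f t)
    have h2 : ‖g t‖ * ‖f t‖ ≤ (C * min (t ^ ε) (t ^ (-ε))) * (C * min (t ^ ε) (t ^ (-ε))) :=
      mul_le_mul (hgb t ht) (hfb t ht) (norm_nonneg _)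
        (mul_nonneg hC.le (le_min (Real.rpow_nonneg ht.le _) (Real.rpow_nonneg ht.le _)))
    have hmn : (0:ℝ) ≤ min (t ^ ε) (t ^ (-ε)) :=
      le_min (Real.rpow_nonneg ht.le _) (Real.rpow_nonneg ht.le _)
    nlinarith [hmin1 t ht, mul_nonneg (mul_nonneg (mul_nonneg hC.le hC.le) hmn) (sub_nonneg.mpr (hmin1 t ht))]
  have hpconv : MellinConvergent (fun t : ℝ => (g t) (f t)) 0 :=
    aux_conv _ hpairc (mul_nonneg hC.le hC.le) hε hpairb (by simp)
  have part1 : IntegrableOn (fun t : ℝ => (g t) (f t) / (t : ℂ)) (Set.Ioi 0) := by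
    refine (hpconv.congr_fun (fun t ht => ?_) measurableSet_Ioi)
    have ht0 : (t : ℂ) ≠ 0 := ofReal_ne_zero.mpr (ne_of_gt ht)
    dsimp only
    rw [zero_sub, Complex.cpow_neg_one, smul_eq_mul, mul_comm, div_eq_mul_inv]
  -- inversion formula
  have hVert : Complex.VerticalIntegrable (mellin f) 0 := by
    have he : ∀ y : ℝ, ((0:ℝ):ℂ) + (y:ℂ) * I = I * y := by
      intro y; push_cast; ring
    unfold Complex.VerticalIntegrable
    simp_rw [he]
    exact hMint
  have hInv : ∀ t : ℝ, 0 < t → mellinInv 0 (mellin f) t = f t := fun t ht =>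
    mellinInv_mellin_eq 0 f ht (hfconv 0 (by simp)) hVert (hf.continuousAt (Ioi_mem_nhds ht))
  -- the kernel
  set K : ℝ → ℝ → ℂ := fun t y => (t : ℂ) ^ (-(I * (y:ℂ)) - 1) * (g t) (M y) with hKdef
  -- pointwise identity
  have hptwise : ∀ t ∈ Set.Ioi (0:ℝ), (g t) (f t) / (t : ℂ) =
      (1 / (2 * (Real.pi:ℂ))) * ∫ y : ℝ, K t y := by
    intro t ht
    have ht' : (0:ℝ) < t := ht
    have ht0 : (t : ℂ) ≠ 0 := ofReal_ne_zero.mpr (ne_of_gt ht')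
    have hintM : Integrable fun y : ℝ => (t:ℂ) ^ (-(I * (y:ℂ))) • M y := by
      refine hint'.mono' ?_ ?_
      · exact (((continuous_const.mul Complex.continuous_ofReal).neg).const_cpow
          (Or.inl ht0)).smul hMcont |>.aestronglyMeasurable
      · refine Eventually.of_forall fun y => ?_
        rw [norm_smul, norm_cpow_eq_rpow_re_of_pos ht']
        simp
    have hstep1 : (g t) (f t) =
        (1 / (2 * Real.pi)) • ∫ y : ℝ, (t:ℂ) ^ (-(I * (y:ℂ))) * (g t) (M y) := by
      conv_lhs => rw [← hInv t ht']
      rw [mellinInv]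
      have he : ∀ y : ℝ, ((0:ℝ):ℂ) + (y:ℂ) * I = I * y := by
        intro y; push_cast; ring
      simp_rw [he]
      rw [ContinuousLinearMap.map_smul_of_tower, ← ContinuousLinearMap.integral_comp_comm (g t) hintM]
      simp only [_root_.map_smul, smul_eq_mul]
    have hcp : ∀ y : ℝ, (t:ℂ) ^ (-(I * (y:ℂ)) - 1) = (t:ℂ) ^ (-(I * (y:ℂ))) / t := by
      intro y
      rw [Complex.cpow_sub _ _ ht0, Complex.cpow_one]
    rw [hstep1, Complex.real_smul]
    push_cast
    rw [mul_div_assoc, ← integral_div]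
    congr 1
    refine integral_congr_ae (Eventually.of_forall fun y => ?_)
    rw [hKdef]
    simp only
    rw [hcp y, div_mul_eq_mul_div]
  -- Fubini
  have hg1 : Integrable (fun t : ℝ => t ^ (-1:ℝ) * ‖g t‖) (volume.restrict (Set.Ioi 0)) := by
    refine ((hgconv 0 (by simp)).norm.congr ?_)
    filter_upwards [ae_restrict_mem measurableSet_Ioi] with t ht
    rw [norm_smul, norm_cpow_eq_rpow_re_of_pos ht]
    norm_num
  have hmeas_eq : (volume.restrict (Set.Ioi (0:ℝ))).prod (volume : Measure ℝ) =
      ((volume : Measure ℝ).prod volume).restrict (Set.Ioi 0 ×ˢ Set.univ) := by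
    have h := Measure.prod_restrict (μ := (volume : Measure ℝ)) (ν := (volume : Measure ℝ))
      (Set.Ioi (0:ℝ)) Set.univ
    rwa [Measure.restrict_univ] at h
  have hcK : ContinuousOn (fun p : ℝ × ℝ => K p.1 p.2) (Set.Ioi 0 ×ˢ Set.univ) := by
    apply ContinuousOn.mul
    · intro p hp
      apply ContinuousAt.continuousWithinAt
      have hc2 : ContinuousAt (fun q : ℂ × ℂ => q.1 ^ q.2) (((p.1:ℝ):ℂ), -(I * (p.2:ℂ)) - 1) :=
        continuousAt_cpow (ofReal_mem_slitPlane.2 (hp.1 : (0:ℝ) < p.1))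
      have hc3 : Continuous (fun p : ℝ × ℝ => ((((p.1:ℝ):ℂ), -(I * (p.2:ℂ)) - 1) : ℂ × ℂ)) := by
        fun_prop
      have := ContinuousAt.comp (x := p) hc2 hc3.continuousAt
      exact this
    · exact (hg.comp continuous_fst.continuousOn (fun p hp => hp.1)).clm_apply
        ((hMcont.comp continuous_snd).continuousOn)
  have hKaesm : AEStronglyMeasurable (fun p : ℝ × ℝ => K p.1 p.2)
      ((volume.restrict (Set.Ioi 0)).prod volume) := by
    rw [hmeas_eq]
    exact hcK.aestronglyMeasurable (measurableSet_Ioi.prod MeasurableSet.univ)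
  have hB : Integrable (fun p : ℝ × ℝ => (p.1 ^ (-1:ℝ) * ‖g p.1‖) * ‖M p.2‖)
      ((volume.restrict (Set.Ioi 0)).prod volume) := hg1.mul_prod hint'
  have hK : Integrable (Function.uncurry K) ((volume.restrict (Set.Ioi 0)).prod volume) := by
    refine hB.mono' hKaesm ?_
    rw [hmeas_eq]
    filter_upwards [ae_restrict_mem (measurableSet_Ioi.prod MeasurableSet.univ)] with p hp
    have hp1 : (0:ℝ) < p.1 := hp.1
    rw [Function.uncurry, hKdef]
    simp only
    rw [norm_mul, norm_cpow_eq_rpow_re_of_pos hp1]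
    have hre : (-(I * (p.2:ℂ)) - 1).re = -1 := by simp
    rw [hre, mul_assoc]
    refine mul_le_mul_of_nonneg_left ?_ (Real.rpow_nonneg hp1.le _)
    exact (g p.1).le_opNorm (M p.2)
  -- inner integral identification
  have hH : ∀ y : ℝ, ∫ t in Set.Ioi (0:ℝ), K t y =
      (∫ t in Set.Ioi (0:ℝ), (t:ℂ) ^ (-(I * (y:ℂ)) - 1) • g t) (M y) := by
    intro y
    have := (ContinuousLinearMap.apply ℂ ℂ (M y)).integral_comp_comm
      ((hgconv (-(I * y)) (by simp)))
    simp only [ContinuousLinearMap.apply_apply, ContinuousLinearMap.smul_apply,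
      smul_eq_mul] at this
    exact this
  -- conclusion 2
  have part2 : Integrable (fun σ : ℝ =>
      (∫ t in Set.Ioi (0:ℝ), (t:ℂ) ^ (-(I * (σ:ℂ)) - 1) • g t) (M σ)) := by
    have h2 := hK.integral_prod_right
    refine h2.congr (Eventually.of_forall fun y => ?_)
    exact hH y
  refine ⟨part1, by simpa only [hMdef, mellin] using part2, ?_⟩
  -- conclusion 3
  calc ∫ t in Set.Ioi (0:ℝ), (g t) (f t) / (t:ℂ)
      = ∫ t in Set.Ioi (0:ℝ), (1 / (2 * (Real.pi:ℂ))) * ∫ y : ℝ, K t y :=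
        setIntegral_congr_fun measurableSet_Ioi hptwise
    _ = (1 / (2 * (Real.pi:ℂ))) * ∫ t in Set.Ioi (0:ℝ), ∫ y : ℝ, K t y := by
        simp_rw [← smul_eq_mul]
        rw [integral_smul]
    _ = (1 / (2 * (Real.pi:ℂ))) * ∫ y : ℝ, ∫ t in Set.Ioi (0:ℝ), K t y := by
        rw [integral_integral_swap hK]
    _ = (1 / (2 * (Real.pi:ℂ))) * ∫ σ : ℝ,
        (∫ t in Set.Ioi (0:ℝ), (t:ℂ) ^ (-(I * (σ:ℂ)) - 1) • g t)
          (∫ t in Set.Ioi (0:ℝ), (t:ℂ) ^ (I * (σ:ℂ) - 1) • f t) := by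
        congr 1
        refine integral_congr_ae (Eventually.of_forall fun y => ?_)
        simpa only [hMdef, mellin] using hH y
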